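/- Let α > 0. For every ε > 0 there exist nonzero square-summable sequences a = (a_n)_{n≥1} and b = (b_n)_{n≥1} of nonnegative reals such that ∑_{m=1}^∞ ∑_{n=1}^∞ a_m b_n (mn)^{α−1/2} / max(m,n)^{2α} ≥ (ζ(1+2α) − ε) · ‖a‖_{ℓ²} ‖b‖_{ℓ²}. In other words, the norm of the bilinear form B_α on ℓ² × ℓ² is at least ζ(1+2α). -/

import Mathlib

open Real

lemma summable_pnat_rpow {p : ℝ} (hp : p < -1) :
    Summable (fun n : ℕ+ => (n : ℝ) ^ p) := by
  have h : Summable (fun n : ℕ => (n : ℝ) ^ p) := Real.summable_nat_rpow.2 hp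
  have h2 := h.comp_injective PNat.coe_injective
  simpa [Function.comp_def] using h2

/-- For `α > 0` and every `ε > 0` there are nonzero nonnegative square-summable sequences
`a, b` with `∑_{m,n} a_m b_n (mn)^{α-1/2} / max(m,n)^{2α} ≥ (ζ(1+2α) - ε) ‖a‖_{ℓ²} ‖b‖_{ℓ²}`;
i.e., the norm of the bilinear form `B_α` on `ℓ² × ℓ²` is at least `ζ(1+2α)`.
Here `ζ(1+2α) = ∑_{n≥1} n^{-(1+2α)}`. -/
theorem bilinear_form_lower_bound_zeta (α : ℝ) (hα : 0 < α) (ε : ℝ) (hε : 0 < ε) :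
    ∃ a b : ℕ+ → ℝ, (∀ n, 0 ≤ a n) ∧ (∀ n, 0 ≤ b n) ∧
      (Summable fun n => a n ^ 2) ∧ (Summable fun n => b n ^ 2) ∧
      a ≠ 0 ∧ b ≠ 0 ∧
      ((∑' n : ℕ+, (n : ℝ) ^ (-(1+2*α))) - ε) *
          (Real.sqrt (∑' n : ℕ+, a n ^ 2) * Real.sqrt (∑' n : ℕ+, b n ^ 2))
        ≤ ∑' (m : ℕ+) (n : ℕ+),
            a m * b n * ((m : ℝ) * (n : ℝ)) ^ (α - 1/2) / (max (m : ℝ) (n : ℝ)) ^ (2*α) := by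
  set q : ℝ := -(1/2 + α) with hqdef
  set p : ℝ := -(1 + 2*α) with hpdef
  set a : ℕ+ → ℝ := fun n => (n : ℝ) ^ q with hadef
  have hpos : ∀ n : ℕ+, (0:ℝ) < (n:ℝ) := fun n => by exact_mod_cast n.pos
  have hone : ∀ n : ℕ+, (1:ℝ) ≤ (n:ℝ) := fun n => by exact_mod_cast n.one_le
  have hanonneg : ∀ n : ℕ+, 0 ≤ a n := fun n => rpow_nonneg (hpos n).le q
  -- squares
  have hsq : ∀ n : ℕ+, a n ^ 2 = (n:ℝ) ^ p := by
    intro n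
    have : a n ^ 2 = (n:ℝ) ^ q * (n:ℝ) ^ q := by ring
    rw [this, ← Real.rpow_add (hpos n)]
    congr 1
    rw [hqdef, hpdef]; ring
  have hp_lt : p < -1 := by rw [hpdef]; linarith
  have hZsum : Summable (fun n : ℕ+ => (n:ℝ) ^ p) := summable_pnat_rpow hp_lt
  have hasum : Summable (fun n : ℕ+ => a n ^ 2) := by
    simpa only [hsq] using hZsum
  set Z : ℝ := ∑' n : ℕ+, (n:ℝ) ^ p with hZdef
  have hZ0 : 0 ≤ Z := tsum_nonneg (fun n => rpow_nonneg (hpos n).le p)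
  have haZ : (∑' n : ℕ+, a n ^ 2) = Z := tsum_congr hsq
  -- the term of the double sum
  set T : ℕ+ → ℕ+ → ℝ := fun m n =>
    a m * a n * ((m : ℝ) * (n : ℝ)) ^ (α - 1/2) / (max (m : ℝ) (n : ℝ)) ^ (2*α) with hTdef
  have hmaxpos : ∀ m n : ℕ+, (0:ℝ) < max (m:ℝ) (n:ℝ) := fun m n =>
    lt_of_lt_of_le (hpos m) (le_max_left _ _)
  have hT_eq : ∀ m n : ℕ+, T m n =
      ((m:ℝ) * (n:ℝ)) ^ (-1 : ℝ) * (max (m:ℝ) (n:ℝ)) ^ (-(2*α)) := by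
    intro m n
    have hmn : (0:ℝ) < (m:ℝ) * (n:ℝ) := mul_pos (hpos m) (hpos n)
    have h1 : a m * a n = ((m:ℝ) * (n:ℝ)) ^ q := (Real.mul_rpow (hpos m).le (hpos n).le).symm
    rw [hTdef]
    simp only []
    rw [h1, ← Real.rpow_add hmn, Real.rpow_neg (hmaxpos m n).le, div_eq_mul_inv]
    · congr 2
      rw [hqdef]; ring
  -- lower bound for each term
  have hkey : ∀ m n : ℕ+, (m:ℝ) ^ p * (n:ℝ) ^ p ≤ T m n := by
    intro m n
    have hmn : (0:ℝ) < (m:ℝ) * (n:ℝ) := mul_pos (hpos m) (hpos n)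
    have hmaxle : max (m:ℝ) (n:ℝ) ≤ (m:ℝ) * (n:ℝ) := by
      rcases max_cases (m:ℝ) (n:ℝ) with ⟨h, _⟩ | ⟨h, _⟩
      · rw [h]; nlinarith [hone n, hpos m]
      · rw [h]; nlinarith [hone m, hpos n]
    have h2 : ((m:ℝ) * (n:ℝ)) ^ (-(2*α)) ≤ (max (m:ℝ) (n:ℝ)) ^ (-(2*α)) :=
      Real.rpow_le_rpow_of_nonpos (hmaxpos m n) hmaxle (by linarith)
    have h3 : (m:ℝ) ^ p * (n:ℝ) ^ p =
        ((m:ℝ) * (n:ℝ)) ^ (-1:ℝ) * ((m:ℝ) * (n:ℝ)) ^ (-(2*α)) := by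
      rw [← Real.rpow_add hmn, ← Real.mul_rpow (hpos m).le (hpos n).le]
      congr 1
      rw [hpdef]; ring
    rw [hT_eq m n, h3]
    exact mul_le_mul_of_nonneg_left h2 (rpow_nonneg hmn.le _)
  -- upper bound for each term (for summability)
  set r : ℝ := -(1 + α) with hrdef
  have hr_lt : r < -1 := by rw [hrdef]; linarith
  have hrsum : Summable (fun n : ℕ+ => (n:ℝ) ^ r) := summable_pnat_rpow hr_lt
  have hub : ∀ m n : ℕ+, T m n ≤ (m:ℝ) ^ r * (n:ℝ) ^ r := by
    intro m n
    have hmn : (0:ℝ) < (m:ℝ) * (n:ℝ) := mul_pos (hpos m) (hpos n)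
    have hmaxsq : (m:ℝ) * (n:ℝ) ≤ max (m:ℝ) (n:ℝ) * max (m:ℝ) (n:ℝ) :=
      mul_le_mul (le_max_left _ _) (le_max_right _ _) (hpos n).le (hmaxpos m n).le
    have h2 : (max (m:ℝ) (n:ℝ)) ^ (-(2*α)) ≤ ((m:ℝ) * (n:ℝ)) ^ (-α) := by
      have : (max (m:ℝ) (n:ℝ)) ^ (-(2*α)) = (max (m:ℝ) (n:ℝ) * max (m:ℝ) (n:ℝ)) ^ (-α) := by
        rw [Real.mul_rpow (hmaxpos m n).le (hmaxpos m n).le, ← Real.rpow_add (hmaxpos m n)]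
        congr 1; ring
      rw [this]
      exact Real.rpow_le_rpow_of_nonpos hmn hmaxsq (by linarith)
    have h3 : ((m:ℝ) * (n:ℝ)) ^ (-1:ℝ) * ((m:ℝ) * (n:ℝ)) ^ (-α) = (m:ℝ) ^ r * (n:ℝ) ^ r := by
      rw [← Real.rpow_add hmn, ← Real.mul_rpow (hpos m).le (hpos n).le]
      congr 1
      rw [hrdef]; ring
    calc T m n = ((m:ℝ) * (n:ℝ)) ^ (-1:ℝ) * (max (m:ℝ) (n:ℝ)) ^ (-(2*α)) := hT_eq m n
      _ ≤ ((m:ℝ) * (n:ℝ)) ^ (-1:ℝ) * ((m:ℝ) * (n:ℝ)) ^ (-α) :=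
          mul_le_mul_of_nonneg_left h2 (rpow_nonneg hmn.le _)
      _ = (m:ℝ) ^ r * (n:ℝ) ^ r := h3
  have hTnonneg : ∀ m n : ℕ+, 0 ≤ T m n := by
    intro m n
    exact le_trans (mul_nonneg (rpow_nonneg (hpos m).le p) (rpow_nonneg (hpos n).le p)) (hkey m n)
  -- summability of T in n for each m
  have hTsum : ∀ m : ℕ+, Summable (fun n : ℕ+ => T m n) := by
    intro m
    exact (hrsum.mul_left ((m:ℝ) ^ r)).of_nonneg_of_le (hTnonneg m) (hub m)
  -- summability of the outer sums
  have hgsum : Summable (fun m : ℕ+ => ∑' n : ℕ+, T m n) := by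
    apply (hrsum.mul_right (∑' n : ℕ+, (n:ℝ) ^ r)).of_nonneg_of_le
    · intro m; exact tsum_nonneg (fun n => hTnonneg m n)
    · intro m
      calc (∑' n : ℕ+, T m n) ≤ ∑' n : ℕ+, (m:ℝ) ^ r * (n:ℝ) ^ r :=
            Summable.tsum_le_tsum (hub m) (hTsum m) (hrsum.mul_left _)
        _ = (m:ℝ) ^ r * ∑' n : ℕ+, (n:ℝ) ^ r := tsum_mul_left
  -- the main inequality : Z * Z ≤ double sum
  have hinner : ∀ m : ℕ+, (m:ℝ) ^ p * Z ≤ ∑' n : ℕ+, T m n := by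
    intro m
    calc (m:ℝ) ^ p * Z = ∑' n : ℕ+, (m:ℝ) ^ p * (n:ℝ) ^ p := tsum_mul_left.symm
      _ ≤ ∑' n : ℕ+, T m n := Summable.tsum_le_tsum (hkey m) (hZsum.mul_left _) (hTsum m)
  have hmain : Z * Z ≤ ∑' (m : ℕ+) (n : ℕ+), T m n := by
    calc Z * Z = ∑' m : ℕ+, (m:ℝ) ^ p * Z := tsum_mul_right.symm
      _ ≤ ∑' (m : ℕ+) (n : ℕ+), T m n :=
          Summable.tsum_le_tsum hinner (hZsum.mul_right Z) hgsum
  refine ⟨a, a, hanonneg, hanonneg, hasum, hasum, ?_, ?_, ?_⟩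
  · intro h
    have h1 : a 1 = 0 := by rw [h]; rfl
    have : ((1:ℕ+):ℝ) ^ q = 0 := h1
    simp at this
  · intro h
    have h1 : a 1 = 0 := by rw [h]; rfl
    have : ((1:ℕ+):ℝ) ^ q = 0 := h1
    simp at this
  · rw [haZ, Real.mul_self_sqrt hZ0]
    calc (Z - ε) * Z ≤ Z * Z := mul_le_mul_of_nonneg_right (by linarith) hZ0
      _ ≤ ∑' (m : ℕ+) (n : ℕ+), T m n := hmain
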